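/- Consider a measure-preserving-type setup: a continuous map T : ℝ^n → ℝ^n with components T_1,...,T_n and the Perron–Frobenius operator ℙ acting on densities. If T_1 does not depend on the coordinate z², then for every density ρ on the product sample space, the marginal of ℙρ in the first coordinate equals the marginal of ℙρ_{2̸} in the first coordinate almost everywhere, where ρ_{2̸} is the density with the second coordinate marginalized out and the dynamics restricted accordingly. -/

import Mathlib

open MeasureTheory

/-- `Pρ` is the image of the density `ρ` under the Perron–Frobenius operator
of `T`: for every Borel set `ω`, `∫_ω Pρ = ∫_{T⁻¹ ω} ρ`. -/
def IsPFImage {α : Type*} [MeasureSpace α] (T : α → α) (ρ Pρ : α → ℝ) : Prop :=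
  ∀ s : Set α, MeasurableSet s → ∫ x in s, Pρ x = ∫ x in T ⁻¹' s, ρ x

/-- The marginal of a density `f` on `ℝ^ι` in the coordinate `i`. -/
noncomputable def margAt {ι : Type*} [Fintype ι] [DecidableEq ι] (i : ι)
    (f : (ι → ℝ) → ℝ) (x : ℝ) : ℝ :=
  ∫ w : {l : ι // l ≠ i} → ℝ, f (fun l => if h : l = i then x else w ⟨l, h⟩)

/-- Marginalizing the coordinate `i` out of a density `f` on `ℝ^ι`. -/
noncomputable def margOut {ι : Type*} [Fintype ι] [DecidableEq ι] (i : ι)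
    (f : (ι → ℝ) → ℝ) (w : {l : ι // l ≠ i} → ℝ) : ℝ :=
  ∫ x : ℝ, f (fun l => if h : l = i then x else w ⟨l, h⟩)

/-! ### Auxiliary material -/

/-- Splitting `ℝ^ι` as the product of the `i`-th coordinate and the rest. -/
noncomputable def splitAtCoord {ι : Type*} [DecidableEq ι] (i : ι) :
    (ι → ℝ) ≃ᵐ ℝ × ({l : ι // l ≠ i} → ℝ) :=
  (MeasurableEquiv.piEquivPiSubtypeProd (fun _ : ι => ℝ) (fun l => l = i)).trans
    ((MeasurableEquiv.funUnique {l : ι // l = i} ℝ).prodCongr (MeasurableEquiv.refl _))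

theorem splitAtCoord_mp {ι : Type*} [Fintype ι] [DecidableEq ι] (i : ι) :
    MeasurePreserving (splitAtCoord i) volume volume := by
  rw [splitAtCoord, MeasurableEquiv.coe_trans]
  refine MeasurePreserving.comp ?_
    (volume_preserving_piEquivPiSubtypeProd (fun _ : ι => ℝ) (fun l => l = i))
  show MeasurePreserving (Prod.map _ _) _ _
  refine MeasurePreserving.prod ?_ (MeasurePreserving.id _)
  convert volume_preserving_funUnique {l : ι // l = i} ℝ using 2
  case e'_5 => rfl
  all_goals exact congrArg (fun F => @MeasureSpace.pi {l : ι // l = i} F (fun _ => ℝ)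
    (fun _ => Real.measureSpace)) (Subsingleton.elim _ _)

theorem integrable_comp_splitAtCoord {ι : Type*} [Fintype ι] [DecidableEq ι] (i : ι)
    {f : (ι → ℝ) → ℝ} (hf : Integrable f) :
    Integrable (f ∘ (splitAtCoord i).symm) :=
  (((splitAtCoord_mp i).symm (splitAtCoord i)).integrable_comp_emb
    (splitAtCoord i).symm.measurableEmbedding).mpr hf

theorem integrable_margAt {ι : Type*} [Fintype ι] [DecidableEq ι] (i : ι)
    {f : (ι → ℝ) → ℝ} (hf : Integrable f) : Integrable (margAt i f) :=
  (integrable_comp_splitAtCoord i hf).integral_prod_left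

theorem setIntegral_margAt {ι : Type*} [Fintype ι] [DecidableEq ι] (i : ι)
    {f : (ι → ℝ) → ℝ} (hf : Integrable f) {s : Set ℝ} (hs : MeasurableSet s) :
    ∫ x in s, margAt i f x = ∫ z in (fun z : ι → ℝ => z i) ⁻¹' s, f z := by
  have hg : Integrable (f ∘ (splitAtCoord i).symm) := integrable_comp_splitAtCoord i hf
  have h1 : ∫ p in s ×ˢ (Set.univ : Set ({l : ι // l ≠ i} → ℝ)), (f ∘ (splitAtCoord i).symm) p
      = ∫ x in s, margAt i f x := by
    calc ∫ p in s ×ˢ (Set.univ : Set ({l : ι // l ≠ i} → ℝ)), (f ∘ (splitAtCoord i).symm) p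
        = ∫ x in s, ∫ w in Set.univ, (f ∘ (splitAtCoord i).symm) (x, w) :=
          setIntegral_prod _ hg.integrableOn
      _ = ∫ x in s, margAt i f x := by simp only [Measure.restrict_univ]; rfl
  have hset : (splitAtCoord i) ⁻¹' (s ×ˢ (Set.univ : Set ({l : ι // l ≠ i} → ℝ)))
      = (fun z : ι → ℝ => z i) ⁻¹' s := by
    ext z
    simp only [Set.mem_preimage, Set.mem_prod, Set.mem_univ, and_true]
    exact Iff.rfl
  calc ∫ x in s, margAt i f x
      = ∫ p in s ×ˢ Set.univ, (f ∘ (splitAtCoord i).symm) p := h1.symm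
    _ = ∫ z in (splitAtCoord i) ⁻¹' (s ×ˢ Set.univ), (f ∘ (splitAtCoord i).symm)
          (splitAtCoord i z) :=
        ((splitAtCoord_mp i).setIntegral_preimage_emb (splitAtCoord i).measurableEmbedding
          _ _).symm
    _ = ∫ z in (fun z : ι → ℝ => z i) ⁻¹' s, f z := by
        rw [hset]
        simp only [Function.comp_apply, MeasurableEquiv.symm_apply_apply]

theorem setIntegral_margOut {ι : Type*} [Fintype ι] [DecidableEq ι] (i : ι)
    {f : (ι → ℝ) → ℝ} (hf : Integrable f) {A : Set ({l : ι // l ≠ i} → ℝ)}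
    (hA : MeasurableSet A) :
    ∫ z in (fun (z : ι → ℝ) (l : {l : ι // l ≠ i}) => z l.1) ⁻¹' A, f z
      = ∫ w in A, margOut i f w := by
  have hg : Integrable (f ∘ (splitAtCoord i).symm) := integrable_comp_splitAtCoord i hf
  have hpre : (fun (z : ι → ℝ) (l : {l : ι // l ≠ i}) => z l.1) ⁻¹' A
      = (splitAtCoord i) ⁻¹' ((Set.univ : Set ℝ) ×ˢ A) := by
    ext z
    simp only [Set.mem_preimage, Set.mem_prod, Set.mem_univ, true_and]
    exact Iff.rfl
  have hrestr : (volume : Measure (ℝ × ({l : ι // l ≠ i} → ℝ))).restrict (Set.univ ×ˢ A)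
      = (volume : Measure ℝ).prod ((volume : Measure ({l : ι // l ≠ i} → ℝ)).restrict A) := by
    have hv : (volume : Measure (ℝ × ({l : ι // l ≠ i} → ℝ)))
        = (volume : Measure ℝ).prod volume := rfl
    rw [hv, ← Measure.prod_restrict, Measure.restrict_univ]
  calc ∫ z in (fun (z : ι → ℝ) (l : {l : ι // l ≠ i}) => z l.1) ⁻¹' A, f z
      = ∫ z in (splitAtCoord i) ⁻¹' (Set.univ ×ˢ A), (f ∘ (splitAtCoord i).symm)
          (splitAtCoord i z) := by
        rw [hpre]
        simp only [Function.comp_apply, MeasurableEquiv.symm_apply_apply]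
    _ = ∫ p in Set.univ ×ˢ A, (f ∘ (splitAtCoord i).symm) p :=
        (splitAtCoord_mp i).setIntegral_preimage_emb (splitAtCoord i).measurableEmbedding _ _
    _ = ∫ p, (f ∘ (splitAtCoord i).symm) p
          ∂((volume : Measure ℝ).prod (volume.restrict A)) := by rw [← hrestr]
    _ = ∫ w in A, ∫ x, (f ∘ (splitAtCoord i).symm) (x, w) := by
        refine integral_prod_symm _ ?_
        rw [← hrestr]
        exact hg.integrableOn
    _ = ∫ w in A, margOut i f w := rfl

theorem integral_margOut {ι : Type*} [Fintype ι] [DecidableEq ι] (i : ι)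
    {f : (ι → ℝ) → ℝ} (hf : Integrable f) : ∫ w, margOut i f w = ∫ z, f z := by
  have hg : Integrable (f ∘ (splitAtCoord i).symm) := integrable_comp_splitAtCoord i hf
  calc ∫ w, margOut i f w
      = ∫ w, ∫ x, (f ∘ (splitAtCoord i).symm) (x, w) := rfl
    _ = ∫ p, (f ∘ (splitAtCoord i).symm) p := (integral_prod_symm _ hg).symm
    _ = ∫ z, f z := by
        rw [← (splitAtCoord_mp i).integral_comp (splitAtCoord i).measurableEmbedding]
        simp only [Function.comp_apply, MeasurableEquiv.symm_apply_apply]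

/-- Let `T : ℝ^n → ℝ^n` be continuous with first component `T_{i₁}`
independent of the coordinate `i₂`, and let `T'` be the dynamics on the
remaining coordinates, restricted accordingly (its `i₁`-component agrees with
`T_{i₁}`).  Then for every density `ρ`, the `i₁`-marginal of the
Perron–Frobenius image of `ρ` equals, almost everywhere, the `i₁`-marginal of
the Perron–Frobenius image of the density `ρ_{i₂̸}` (with coordinate `i₂`
marginalized out) under the restricted dynamics. -/
theorem pf_marginal_eq_of_independent {n : ℕ} (i₁ i₂ : Fin n) (h12 : i₁ ≠ i₂)
    (T : (Fin n → ℝ) → (Fin n → ℝ)) (hT : Continuous T)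
    (hind : ∀ z w : Fin n → ℝ, (∀ l, l ≠ i₂ → z l = w l) → T z i₁ = T w i₁)
    (T' : ({l : Fin n // l ≠ i₂} → ℝ) → ({l : Fin n // l ≠ i₂} → ℝ))
    (hT' : ∀ z : Fin n → ℝ, T' (fun l => z l) ⟨i₁, h12⟩ = T z i₁)
    (ρ : (Fin n → ℝ) → ℝ) (hρ : Measurable ρ) (hρ0 : ∀ z, 0 ≤ ρ z)
    (hρ1 : ∫ z, ρ z = 1)
    (Pρ : (Fin n → ℝ) → ℝ) (hPρ : IsPFImage T ρ Pρ)
    (Pρ' : ({l : Fin n // l ≠ i₂} → ℝ) → ℝ) (hPρ' : IsPFImage T' (margOut i₂ ρ) Pρ') :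
    ∀ᵐ x : ℝ, margAt i₁ Pρ x = margAt (⟨i₁, h12⟩ : {l : Fin n // l ≠ i₂}) Pρ' x := by
  have hρInt : Integrable ρ := integrable_of_integral_eq_one hρ1
  have hPρInt : Integrable Pρ := by
    apply integrable_of_integral_eq_one
    have h := hPρ Set.univ MeasurableSet.univ
    rw [Set.preimage_univ, setIntegral_univ, setIntegral_univ] at h
    rw [h, hρ1]
  have hmargρ1 : ∫ w, margOut i₂ ρ w = 1 := by rw [integral_margOut i₂ hρInt, hρ1]
  have hPρ'Int : Integrable Pρ' := by
    apply integrable_of_integral_eq_one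
    have h := hPρ' Set.univ MeasurableSet.univ
    rw [Set.preimage_univ, setIntegral_univ, setIntegral_univ] at h
    rw [h, hmargρ1]
  -- the first component of `T'` (equivalently, of `T`) as a function of the other coordinates
  set F : ({l : Fin n // l ≠ i₂} → ℝ) → ℝ := fun w => T' w ⟨i₁, h12⟩ with hF
  have hFeq : F = fun w => T (fun l => if h : l = i₂ then 0 else w ⟨l, h⟩) i₁ := by
    funext w
    have h := hT' (fun l => if h : l = i₂ then 0 else w ⟨l, h⟩)
    rw [← h, hF]
    congr 1
    funext l
    rw [dif_neg l.2]
  have hFc : Continuous F := by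
    rw [hFeq]
    refine ((continuous_apply i₁).comp hT).comp (continuous_pi fun l => ?_)
    by_cases h : l = i₂
    · simpa [h] using continuous_const
    · simpa [h] using continuous_apply (⟨l, h⟩ : {l : Fin n // l ≠ i₂})
  refine Integrable.ae_eq_of_forall_setIntegral_eq _ _ (integrable_margAt i₁ hPρInt)
    (integrable_margAt _ hPρ'Int) ?_
  intro s hs _
  have hAmeas : MeasurableSet (F ⁻¹' s) := hFc.measurable hs
  rw [setIntegral_margAt i₁ hPρInt hs, setIntegral_margAt _ hPρ'Int hs,
    hPρ _ ((measurable_pi_apply i₁) hs), hPρ' _ ((measurable_pi_apply _) hs)]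
  have hTpre : T ⁻¹' ((fun z : Fin n → ℝ => z i₁) ⁻¹' s)
      = (fun (z : Fin n → ℝ) (l : {l : Fin n // l ≠ i₂}) => z l.1) ⁻¹' (F ⁻¹' s) := by
    ext z
    simp only [Set.mem_preimage, hF]
    rw [hT' z]
  have hT'pre : T' ⁻¹' ((fun w : {l : Fin n // l ≠ i₂} → ℝ => w ⟨i₁, h12⟩) ⁻¹' s)
      = F ⁻¹' s := rfl
  rw [hTpre, hT'pre, setIntegral_margOut i₂ hρInt hAmeas]
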